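/- For n ≥ 1 let F_n ∈ ℂ[Z_1, …, Z_n] be the polynomials defined by the identity exp(Σ_{n≥1} Z_n X^n) = 1 + Σ_{n≥1} F_n(Z_1,…,Z_n) X^n of formal power series in X over the polynomial ring. Let N be a positive integer, let i = (i_1, …, i_{N−1}) ∈ ℕ₀^{N−1} be a multi-index with |i| = i_1 + ⋯ + i_{N−1} ≥ 1, and set S(i) = i_1 + 2 i_2 + ⋯ + (N−1) i_{N−1}. Then for every sequence (z_n)_{n≥1} of complex numbers and every n ≥ 1, the partial derivative ∂^{|i|} F_n / (∂Z_1^{i_1} ⋯ ∂Z_{N−1}^{i_{N−1}}) evaluated at (z_1,…,z_n) has absolute value at most the coefficient of X^n in X^{S(i)} · exp(Σ_{m≥1} |z_m| X^m); in particular it vanishes when n < S(i). -/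

import Mathlib

noncomputable section

/-- The exponential of a formal power series (intended for series with zero constant term):
the coefficient of `X^n` in `exp F = ∑_k F^k / k!` (only `k ≤ n` contribute when the constant
term of `F` vanishes). -/
def PowerSeries.expOf {K : Type*} [Field K] (F : PowerSeries K) : PowerSeries K :=
  PowerSeries.mk fun n =>
    ∑ k ∈ Finset.range (n + 1), (k.factorial : K)⁻¹ * PowerSeries.coeff (R := K) n (F ^ k)


/-- The polynomials `F_n ∈ ℂ[Z_1, Z_2, …]` defined by
`exp (∑_{m ≥ 1} Z_m X^m) = 1 + ∑_{n ≥ 1} F_n(Z_1, …, Z_n) X^n`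
(the variable `Z_m` is `MvPolynomial.X m`). -/
def Fpoly (n : ℕ) : MvPolynomial ℕ ℂ :=
  ∑ k ∈ Finset.range (n + 1),
    MvPolynomial.C ((k.factorial : ℂ)⁻¹) *
      PowerSeries.coeff (R := (MvPolynomial ℕ ℂ)) n
        ((PowerSeries.mk fun m => if m = 0 then 0 else MvPolynomial.X m) ^ k)

/-- The iterated partial derivative `∂^i = ∂^{i_1}_{Z_1} ⋯ ∂^{i_{M}}_{Z_{M}}` attached to a
multi-index `i ∈ ℕ₀^M`. -/
def pderivMulti (M : ℕ) (i : Fin M → ℕ) (P : MvPolynomial ℕ ℂ) : MvPolynomial ℕ ℂ :=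
  (List.finRange M).foldl
    (fun (Q : MvPolynomial ℕ ℂ) (j : Fin M) => (fun Q' => MvPolynomial.pderiv ((j : ℕ) + 1) Q')^[i j] Q) P

open PowerSeries MvPolynomial

/-- The generating series `∑_{m ≥ 1} Z_m X^m`. -/
def Gser : PowerSeries (MvPolynomial ℕ ℂ) :=
  PowerSeries.mk fun m => if m = 0 then 0 else MvPolynomial.X m

lemma coeff_pow_eq_zero' {R : Type*} [CommRing R] {F : PowerSeries R}
    (hF : PowerSeries.constantCoeff (R := R) F = 0) {n k : ℕ} (h : n < k) :
    PowerSeries.coeff (R := R) n (F ^ k) = 0 := by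
  have hd : (PowerSeries.X : PowerSeries R) ^ k ∣ F ^ k :=
    pow_dvd_pow_of_dvd (PowerSeries.X_dvd_iff.mpr hF) k
  exact PowerSeries.X_pow_dvd_iff.mp hd n h

lemma constantCoeff_Gser : PowerSeries.constantCoeff (R := (MvPolynomial ℕ ℂ)) Gser = 0 := by
  simp [Gser, ← PowerSeries.coeff_zero_eq_constantCoeff_apply]

lemma Fpoly_eq_sum (n M : ℕ) (h : n < M) :
    Fpoly n = ∑ k ∈ Finset.range M,
      MvPolynomial.C ((k.factorial : ℂ)⁻¹) * PowerSeries.coeff (R := (MvPolynomial ℕ ℂ)) n (Gser ^ k) := by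
  have h0 : (PowerSeries.mk fun m => if m = 0 then 0 else MvPolynomial.X m) = Gser := rfl
  rw [Fpoly, h0]
  refine Finset.sum_subset (Finset.range_subset_range.2 (by omega)) fun k hk hk' => ?_
  rw [coeff_pow_eq_zero' constantCoeff_Gser (by simp only [Finset.mem_range] at hk hk'; omega),
    mul_zero]

lemma D_mul (j : ℕ) (F H : PowerSeries (MvPolynomial ℕ ℂ)) (n : ℕ) :
    MvPolynomial.pderiv j (PowerSeries.coeff n (F * H)) =
      PowerSeries.coeff n
        (PowerSeries.mk (fun m => MvPolynomial.pderiv j (PowerSeries.coeff m F)) * H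
          + F * PowerSeries.mk fun m => MvPolynomial.pderiv j (PowerSeries.coeff m H)) := by
  rw [PowerSeries.coeff_mul, map_sum, map_add, PowerSeries.coeff_mul, PowerSeries.coeff_mul,
    ← Finset.sum_add_distrib]
  refine Finset.sum_congr rfl fun p _ => ?_
  simp only [PowerSeries.coeff_mk, pderiv_mul]

lemma D_Gser (j : ℕ) (hj : 1 ≤ j) :
    (PowerSeries.mk fun m => MvPolynomial.pderiv j (PowerSeries.coeff m Gser)) =
      (PowerSeries.X : PowerSeries (MvPolynomial ℕ ℂ)) ^ j := by
  ext m
  simp only [Gser, PowerSeries.coeff_mk, PowerSeries.coeff_X_pow]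
  by_cases hm : m = 0
  · subst hm
    rw [if_pos rfl, map_zero, if_neg (by omega)]
  · rw [if_neg hm]
    by_cases h : m = j
    · subst h
      rw [pderiv_X_self, if_pos rfl]
    · rw [pderiv_X_of_ne h, if_neg h]

lemma D_Gser_pow (j k : ℕ) (hj : 1 ≤ j) :
    (PowerSeries.mk fun m => MvPolynomial.pderiv j (PowerSeries.coeff m (Gser ^ k))) =
      k • ((PowerSeries.X : PowerSeries (MvPolynomial ℕ ℂ)) ^ j * Gser ^ (k - 1)) := by
  induction k with
  | zero =>
    ext m
    simp [PowerSeries.coeff_one, apply_ite (MvPolynomial.pderiv j)]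
  | succ k ih =>
    ext m
    rw [PowerSeries.coeff_mk, pow_succ, D_mul j _ _ m, ih, D_Gser j hj]
    rcases Nat.eq_zero_or_pos k with hk | hk
    · subst hk; simp [mul_comm]
    · have h1 : k - 1 + 1 = k := by omega
      have : (k • ((PowerSeries.X : PowerSeries (MvPolynomial ℕ ℂ)) ^ j * Gser ^ (k - 1))) * Gser
          + Gser ^ k * PowerSeries.X ^ j
          = (k + 1) • (PowerSeries.X ^ j * Gser ^ (k + 1 - 1)) := by
        rw [smul_mul_assoc, mul_assoc, ← pow_succ, h1, Nat.add_sub_cancel, succ_nsmul]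
        ring_nf
      rw [this]

lemma pderiv_Fpoly (j n : ℕ) (hj : 1 ≤ j) :
    MvPolynomial.pderiv j (Fpoly n) = if j ≤ n then Fpoly (n - j) else 0 := by
  have hG : Fpoly n = ∑ k ∈ Finset.range (n + 1),
      MvPolynomial.C ((k.factorial : ℂ)⁻¹) * PowerSeries.coeff (R := (MvPolynomial ℕ ℂ)) n (Gser ^ k) :=
    Fpoly_eq_sum n (n + 1) (by omega)
  rw [hG, map_sum]
  have hterm : ∀ k : ℕ,
      MvPolynomial.pderiv j (MvPolynomial.C ((k.factorial : ℂ)⁻¹) *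
        PowerSeries.coeff (R := (MvPolynomial ℕ ℂ)) n (Gser ^ k)) =
      MvPolynomial.C ((k.factorial : ℂ)⁻¹) *
        (k • PowerSeries.coeff (R := (MvPolynomial ℕ ℂ)) n (PowerSeries.X ^ j * Gser ^ (k - 1))) := by
    intro k
    rw [pderiv_C_mul]
    congr 1
    have h := congrArg (PowerSeries.coeff (R := (MvPolynomial ℕ ℂ)) n) (D_Gser_pow j k hj)
    rw [PowerSeries.coeff_mk] at h
    rw [h, map_nsmul]
  rw [Finset.sum_congr rfl fun k _ => hterm k, Finset.sum_range_succ']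
  have hzero : MvPolynomial.C (((0:ℕ).factorial : ℂ)⁻¹) *
      ((0:ℕ) • PowerSeries.coeff (R := (MvPolynomial ℕ ℂ)) n (PowerSeries.X ^ j * Gser ^ (0 - 1))) = 0 := by
    simp
  rw [hzero, add_zero]
  have hred : ∀ k : ℕ,
      MvPolynomial.C (((k+1).factorial : ℂ)⁻¹) *
        ((k+1) • PowerSeries.coeff (R := (MvPolynomial ℕ ℂ)) n (PowerSeries.X ^ j * Gser ^ (k + 1 - 1))) =
      MvPolynomial.C ((k.factorial : ℂ)⁻¹) *
        PowerSeries.coeff (R := (MvPolynomial ℕ ℂ)) n (PowerSeries.X ^ j * Gser ^ k) := by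
    intro k
    rw [Nat.add_sub_cancel, nsmul_eq_mul, ← mul_assoc]
    congr 1
    have : ((k+1 : ℕ) : MvPolynomial ℕ ℂ) = MvPolynomial.C ((k+1 : ℕ) : ℂ) :=
      (map_natCast (MvPolynomial.C : ℂ →+* MvPolynomial ℕ ℂ) (k+1)).symm
    rw [this, ← map_mul]
    congr 1
    have h1 : ((k+1 : ℕ) : ℂ) ≠ 0 := Nat.cast_ne_zero.2 (Nat.succ_ne_zero k)
    have h2 : ((k.factorial : ℕ) : ℂ) ≠ 0 := Nat.cast_ne_zero.2 k.factorial_ne_zero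
    rw [Nat.factorial_succ]
    push_cast
    field_simp
  rw [Finset.sum_congr rfl fun k _ => hred k]
  by_cases hjn : j ≤ n
  · rw [if_pos hjn, Fpoly_eq_sum (n - j) n (by omega)]
    refine Finset.sum_congr rfl fun k _ => ?_
    rw [PowerSeries.coeff_X_pow_mul', if_pos hjn]
  · rw [if_neg hjn]
    refine Finset.sum_eq_zero fun k _ => ?_
    rw [PowerSeries.coeff_X_pow_mul', if_neg hjn, mul_zero]

lemma iterate_pderiv_Fpoly (j c n : ℕ) (hj : 1 ≤ j) :
    (fun Q => MvPolynomial.pderiv j Q)^[c] (Fpoly n) =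
      if j * c ≤ n then Fpoly (n - j * c) else 0 := by
  induction c generalizing n with
  | zero => simp
  | succ c ih =>
    rw [Function.iterate_succ_apply', ih n]
    simp only [Nat.mul_succ]
    by_cases h : j * c ≤ n
    · rw [if_pos h, pderiv_Fpoly j _ hj]
      by_cases h2 : j ≤ n - j * c
      · rw [if_pos h2, if_pos (by omega : j * c + j ≤ n)]
        congr 1
        omega
      · rw [if_neg h2, if_neg (by omega : ¬ j * c + j ≤ n)]
    · rw [if_neg h, map_zero, if_neg (by omega : ¬ j * c + j ≤ n)]

lemma foldl_zero (M : ℕ) (i : Fin M → ℕ) (l : List (Fin M)) :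
    l.foldl (fun (Q : MvPolynomial ℕ ℂ) (j : Fin M) =>
      (fun Q' => MvPolynomial.pderiv ((j : ℕ) + 1) Q')^[i j] Q) 0 = 0 := by
  induction l with
  | nil => rfl
  | cons a t ih =>
    rw [List.foldl_cons, Function.iterate_fixed (map_zero _) (i a), ih]

lemma foldl_Fpoly (M : ℕ) (i : Fin M → ℕ) (l : List (Fin M)) (n : ℕ) :
    l.foldl (fun (Q : MvPolynomial ℕ ℂ) (j : Fin M) =>
        (fun Q' => MvPolynomial.pderiv ((j : ℕ) + 1) Q')^[i j] Q) (Fpoly n) =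
      if (l.map fun j : Fin M => ((j : ℕ) + 1) * i j).sum ≤ n then
        Fpoly (n - (l.map fun j : Fin M => ((j : ℕ) + 1) * i j).sum) else 0 := by
  induction l generalizing n with
  | nil =>
    simp only [List.foldl_nil, List.map_nil, List.sum_nil, Nat.zero_le, if_true, Nat.sub_zero]
  | cons a t ih =>
    rw [List.foldl_cons, iterate_pderiv_Fpoly ((a : ℕ) + 1) (i a) n (by omega)]
    simp only [List.map_cons, List.sum_cons]
    by_cases h : ((a : ℕ) + 1) * i a ≤ n
    · rw [if_pos h, ih]
      by_cases h2 : (t.map fun j : Fin M => ((j : ℕ) + 1) * i j).sum ≤ n - ((a : ℕ) + 1) * i a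
      · rw [if_pos h2, if_pos (by omega)]
        congr 1
        omega
      · rw [if_neg h2, if_neg (by omega)]
    · rw [if_neg h, foldl_zero, if_neg (by omega)]

lemma coeff_pow_norm_le (A : PowerSeries ℂ) (B : PowerSeries ℝ)
    (h : ∀ m, ‖PowerSeries.coeff (R := ℂ) m A‖ ≤ PowerSeries.coeff (R := ℝ) m B) (k n : ℕ) :
    ‖PowerSeries.coeff (R := ℂ) n (A ^ k)‖ ≤ PowerSeries.coeff (R := ℝ) n (B ^ k) := by
  induction k generalizing n with
  | zero =>
    simp only [pow_zero, PowerSeries.coeff_one]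
    split_ifs <;> simp
  | succ k ih =>
    rw [pow_succ, pow_succ, PowerSeries.coeff_mul, PowerSeries.coeff_mul]
    refine (norm_sum_le _ _).trans (Finset.sum_le_sum fun p _ => ?_)
    rw [norm_mul]
    exact mul_le_mul (ih p.1) (h p.2) (norm_nonneg _) ((norm_nonneg _).trans (ih p.1))

lemma eval_Fpoly_bound (z : ℕ → ℂ) (m : ℕ) :
    ‖MvPolynomial.eval z (Fpoly m)‖ ≤
      PowerSeries.coeff (R := ℝ) m
        (PowerSeries.expOf (PowerSeries.mk fun m => if m = 0 then 0 else ‖z m‖)) := by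
  set A : PowerSeries ℂ := PowerSeries.mk fun m => if m = 0 then 0 else z m with hA
  set B : PowerSeries ℝ := PowerSeries.mk fun m => if m = 0 then 0 else ‖z m‖ with hB
  have hmap : PowerSeries.map (MvPolynomial.eval z) Gser = A := by
    ext m
    simp [PowerSeries.coeff_map, Gser, hA, apply_ite (MvPolynomial.eval z)]
  have heval : MvPolynomial.eval z (Fpoly m) =
      ∑ k ∈ Finset.range (m + 1), ((k.factorial : ℂ)⁻¹) * PowerSeries.coeff (R := ℂ) m (A ^ k) := by
    rw [Fpoly, map_sum]
    refine Finset.sum_congr rfl fun k _ => ?_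
    rw [map_mul, eval_C]
    congr 1
    have hGm : (PowerSeries.mk fun m => if m = 0 then 0 else MvPolynomial.X m) = Gser := rfl
    rw [hGm, ← hmap, ← map_pow, PowerSeries.coeff_map]
  have hAB : ∀ m', ‖PowerSeries.coeff (R := ℂ) m' A‖ ≤ PowerSeries.coeff (R := ℝ) m' B := by
    intro m'
    by_cases hm : m' = 0 <;> simp [hA, hB, hm]
  rw [heval]
  have : PowerSeries.coeff (R := ℝ) m (PowerSeries.expOf B) =
      ∑ k ∈ Finset.range (m + 1), ((k.factorial : ℝ)⁻¹) * PowerSeries.coeff (R := ℝ) m (B ^ k) := by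
    rw [PowerSeries.expOf, PowerSeries.coeff_mk]
  rw [this]
  refine (norm_sum_le _ _).trans (Finset.sum_le_sum fun k _ => ?_)
  rw [norm_mul, norm_inv]
  have hnorm : ‖(k.factorial : ℂ)‖ = (k.factorial : ℝ) := by
    rw [Complex.norm_natCast]
  rw [hnorm]
  exact mul_le_mul_of_nonneg_left (coeff_pow_norm_le A B hAB k m)
    (by positivity)

/-- **Lemma 3.6 (ii).**  For a multi-index `i ∈ ℕ₀^{N-1}` with `|i| ≥ 1` and
`S(i) = i_1 + 2 i_2 + ⋯ + (N-1) i_{N-1}`, the value `∂^i F_n (z_1, …, z_n)` is bounded by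
the `n`-th coefficient of `X^{S(i)} exp (∑_{m ≥ 1} |z_m| X^m)`; in particular it vanishes
when `n < S(i)`. -/
theorem pderiv_Fpoly_bound (N : ℕ) (hN : 1 ≤ N) (i : Fin (N - 1) → ℕ)
    (hi : 1 ≤ ∑ j, i j) (z : ℕ → ℂ) (n : ℕ) (hn : 1 ≤ n) :
    ‖MvPolynomial.eval z (pderivMulti (N - 1) i (Fpoly n))‖ ≤
        PowerSeries.coeff (R := ℝ) n
          (PowerSeries.X ^ (∑ j : Fin (N - 1), ((j : ℕ) + 1) * i j) *
            PowerSeries.expOf (PowerSeries.mk fun m => if m = 0 then 0 else ‖z m‖)) ∧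
      (n < ∑ j : Fin (N - 1), ((j : ℕ) + 1) * i j →
        MvPolynomial.eval z (pderivMulti (N - 1) i (Fpoly n)) = 0) := by
  have hsum : (∑ j : Fin (N - 1), ((j : ℕ) + 1) * i j) =
      ((List.finRange (N - 1)).map fun j : Fin (N - 1) => ((j : ℕ) + 1) * i j).sum :=
    Fin.sum_univ_def _
  set S := ∑ j : Fin (N - 1), ((j : ℕ) + 1) * i j with hS
  have hmulti : pderivMulti (N - 1) i (Fpoly n) = if S ≤ n then Fpoly (n - S) else 0 := by
    rw [pderivMulti, foldl_Fpoly, ← hsum]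
  constructor
  · rw [hmulti, PowerSeries.coeff_X_pow_mul']
    by_cases hSn : S ≤ n
    · rw [if_pos hSn, if_pos hSn]
      exact eval_Fpoly_bound z (n - S)
    · rw [if_neg hSn, if_neg hSn, map_zero, norm_zero]
  · intro hlt
    rw [hmulti, if_neg (by omega), map_zero]

end
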